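/- Let x̂ be optimal for the refined QP min (1/2)xᵀ(Δ_D/Δ_P)Qx + (Δ_D ĉ)ᵀx s.t. Ax = Δ_P b̂, x ≥ Δ_P l̂ with multiplier ŷ (satisfying its KKT conditions exactly), where ĉ = Qx* + c − Aᵀy*, b̂ = b − Ax*, l̂ = l − x*, Δ_P, Δ_D > 0. Then x* + x̂/Δ_P together with multiplier y* + ŷ/Δ_D satisfies the KKT conditions of the original QP min (1/2)xᵀQx + cᵀx s.t. Ax = b, x ≥ l exactly, and hence (if Q is positive semidefinite) x* + x̂/Δ_P is a global optimum of the original QP. -/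

import Mathlib

open Matrix

/-- Exact refinement corollary: if (x̂, ŷ) exactly satisfies the KKT conditions of the
    refined QP (data ((Δ_D/Δ_P)Q, Δ_D ĉ, Δ_P b̂, Δ_P l̂) with ĉ = Qx* + c − Aᵀy*,
    b̂ = b − Ax*, l̂ = l − x*), then (x* + x̂/Δ_P, y* + ŷ/Δ_D) exactly satisfies the KKT
    conditions of the original QP, and if Q is positive semidefinite then x* + x̂/Δ_P is a
    global optimum of the original QP. -/
theorem exact_refinement_corollary {n m : ℕ}
    (Q : Matrix (Fin n) (Fin n) ℝ) (A : Matrix (Fin m) (Fin n) ℝ)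
    (c l : Fin n → ℝ) (b : Fin m → ℝ)
    (xs : Fin n → ℝ) (ys : Fin m → ℝ)
    (ΔP ΔD : ℝ) (hΔP : 0 < ΔP) (hΔD : 0 < ΔD)
    (xh : Fin n → ℝ) (yh : Fin m → ℝ)
    (hkkt1 : A.mulVec xh = ΔP • (b - A.mulVec xs))
    (hkkt2 : ∀ i, ΔP * (l - xs) i ≤ xh i)
    (hkkt3 : ∀ i, Aᵀ.mulVec yh i ≤
      ((ΔD / ΔP) • Q.mulVec xh + ΔD • (Q.mulVec xs + c - Aᵀ.mulVec ys)) i)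
    (hkkt4 : ((ΔD / ΔP) • Q.mulVec xh + ΔD • (Q.mulVec xs + c - Aᵀ.mulVec ys)
      - Aᵀ.mulVec yh) ⬝ᵥ (xh - ΔP • (l - xs)) = 0) :
    (A.mulVec (xs + ΔP⁻¹ • xh) = b ∧
     (∀ i, l i ≤ (xs + ΔP⁻¹ • xh) i) ∧
     (∀ i, Aᵀ.mulVec (ys + ΔD⁻¹ • yh) i ≤
        (Q.mulVec (xs + ΔP⁻¹ • xh) + c) i) ∧
     (Q.mulVec (xs + ΔP⁻¹ • xh) + c - Aᵀ.mulVec (ys + ΔD⁻¹ • yh)) ⬝ᵥ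
        ((xs + ΔP⁻¹ • xh) - l) = 0) ∧
    (Q.PosSemidef →
      ∀ x : Fin n → ℝ, A.mulVec x = b → (∀ i, l i ≤ x i) →
        (1/2) * ((xs + ΔP⁻¹ • xh) ⬝ᵥ Q.mulVec (xs + ΔP⁻¹ • xh)) + c ⬝ᵥ (xs + ΔP⁻¹ • xh) ≤
          (1/2) * (x ⬝ᵥ Q.mulVec x) + c ⬝ᵥ x) := by
  have hP : ΔP ≠ 0 := hΔP.ne'
  have hD : ΔD ≠ 0 := hΔD.ne'
  set u : Fin n → ℝ := xs + ΔP⁻¹ • xh with hu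
  set v : Fin m → ℝ := ys + ΔD⁻¹ • yh with hv
  -- the refined gradient equals ΔD • (Q u + c − Aᵀ ys)
  have hgrad : (ΔD / ΔP) • Q.mulVec xh + ΔD • (Q.mulVec xs + c - Aᵀ.mulVec ys)
      = ΔD • (Q.mulVec u + c - Aᵀ.mulVec ys) := by
    rw [hu, mulVec_add, mulVec_smul]
    match_scalars <;> field_simp
  -- KKT1
  have k1 : A.mulVec u = b := by
    rw [hu, mulVec_add, mulVec_smul, hkkt1, smul_smul, inv_mul_cancel₀ hP, one_smul]
    simp
  -- KKT2
  have k2 : ∀ i, l i ≤ u i := by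
    intro i
    have h1 : ΔP⁻¹ * (ΔP * (l - xs) i) ≤ ΔP⁻¹ * xh i :=
      mul_le_mul_of_nonneg_left (hkkt2 i) (inv_nonneg.mpr hΔP.le)
    rw [inv_mul_cancel_left₀ hP] at h1
    simp only [hu, Pi.add_apply, Pi.smul_apply, Pi.sub_apply, smul_eq_mul] at *
    linarith
  -- KKT3
  have k3 : ∀ i, Aᵀ.mulVec v i ≤ (Q.mulVec u + c) i := by
    intro i
    have h := hkkt3 i
    rw [hgrad] at h
    have h1 : ΔD⁻¹ * (Aᵀ.mulVec yh i) ≤ ΔD⁻¹ * (ΔD • (Q.mulVec u + c - Aᵀ.mulVec ys)) i := by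
      exact mul_le_mul_of_nonneg_left h (inv_nonneg.mpr hΔD.le)
    simp only [Pi.smul_apply, smul_eq_mul, inv_mul_cancel_left₀ hD] at h1
    rw [hv, mulVec_add, mulVec_smul]
    simp only [Pi.add_apply, Pi.smul_apply, Pi.sub_apply, smul_eq_mul] at *
    linarith
  -- KKT4
  have hvec1 : (ΔD / ΔP) • Q.mulVec xh + ΔD • (Q.mulVec xs + c - Aᵀ.mulVec ys)
      - Aᵀ.mulVec yh = ΔD • (Q.mulVec u + c - Aᵀ.mulVec v) := by
    rw [hgrad, hv]
    simp only [mulVec_add, mulVec_smul]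
    funext i
    simp only [Pi.smul_apply, Pi.sub_apply, Pi.add_apply, smul_eq_mul]
    field_simp
    ring
  have hvec2 : xh - ΔP • (l - xs) = ΔP • (u - l) := by
    rw [hu]
    match_scalars <;> field_simp
  have k4 : (Q.mulVec u + c - Aᵀ.mulVec v) ⬝ᵥ (u - l) = 0 := by
    rw [hvec1, hvec2, smul_dotProduct, dotProduct_smul, smul_eq_mul, smul_eq_mul] at hkkt4
    exact (mul_eq_zero.mp ((mul_eq_zero.mp hkkt4).resolve_left hD)).resolve_left hP
  refine ⟨⟨k1, k2, k3, k4⟩, ?_⟩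
  intro hQ x hAx hxl
  set w : Fin n → ℝ := Q.mulVec u + c - Aᵀ.mulVec v with hw
  have hw0 : ∀ i, 0 ≤ w i := by
    intro i
    have := k3 i
    simp only [hw, Pi.sub_apply]
    linarith
  have hsym : Qᵀ = Q := by
    have := hQ.1
    exact (by simpa [conjTranspose, Matrix.map] using this : Q.IsSymm)
  set d : Fin n → ℝ := x - u with hd
  have hAd : A.mulVec d = 0 := by
    rw [hd, mulVec_sub, hAx, k1, sub_self]
  -- (Aᵀ v) ⬝ d = 0
  have hAvd : Aᵀ.mulVec v ⬝ᵥ d = 0 := by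
    rw [Matrix.mulVec_transpose, ← Matrix.dotProduct_mulVec, hAd, dotProduct_zero]
  -- w ⬝ d ≥ 0
  have hwd : 0 ≤ w ⬝ᵥ d := by
    have h1 : w ⬝ᵥ d = w ⬝ᵥ (x - l) - w ⬝ᵥ (u - l) := by
      rw [← dotProduct_sub]
      congr 1
      ext i
      simp only [hd, Pi.sub_apply]
      ring
    have h2 : 0 ≤ w ⬝ᵥ (x - l) := by
      apply Finset.sum_nonneg
      intro i _
      exact mul_nonneg (hw0 i) (by simp [Pi.sub_apply]; linarith [hxl i])
    rw [h1, k4]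
    linarith
  -- gradient inequality: (Q u + c) ⬝ d ≥ 0
  have hgd : 0 ≤ (Q.mulVec u + c) ⬝ᵥ d := by
    have : (Q.mulVec u + c) ⬝ᵥ d = w ⬝ᵥ d + Aᵀ.mulVec v ⬝ᵥ d := by
      rw [hw, sub_dotProduct]; ring
    rw [this, hAvd]
    linarith
  -- symmetry of dot products
  have hsymdot : ∀ a e : Fin n → ℝ, a ⬝ᵥ Q.mulVec e = e ⬝ᵥ Q.mulVec a := by
    intro a e
    rw [Matrix.dotProduct_mulVec, ← Matrix.mulVec_transpose, hsym, dotProduct_comm]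
  have hdQd : 0 ≤ d ⬝ᵥ Q.mulVec d := by simpa using hQ.dotProduct_mulVec_nonneg d
  have hdexp : d ⬝ᵥ Q.mulVec d
      = x ⬝ᵥ Q.mulVec x - 2 * (x ⬝ᵥ Q.mulVec u) + u ⬝ᵥ Q.mulVec u := by
    rw [hd]
    simp only [mulVec_sub, dotProduct_sub, sub_dotProduct]
    rw [hsymdot u x]
    ring
  have hgexp : (Q.mulVec u + c) ⬝ᵥ d
      = x ⬝ᵥ Q.mulVec u - u ⬝ᵥ Q.mulVec u + c ⬝ᵥ x - c ⬝ᵥ u := by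
    rw [hd]
    simp only [add_dotProduct, dotProduct_sub]
    rw [dotProduct_comm (Q.mulVec u) x, dotProduct_comm (Q.mulVec u) u]
    ring
  linarith [hgd, hdQd, hdexp, hgexp]
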